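/- Let μ ≤ 0, σ > 0, r > μ²/(2σ²). Then there exist constants c₁, C₁ > 0 such that for all sufficiently small s > 0, c₁·s^{1/√2} ≤ exp(-∑_{n=1}^∞ (e^{-rns}/n)·P[σB_{ns} + μns ≤ 0]) ≤ C₁·s^{1/2}. -/

import Mathlib

open MeasureTheory ProbabilityTheory Real
open scoped NNReal ENNReal

lemma aux_ineq (x : ℝ) (hx : 0 ≤ x) :
    1/2 + x / Real.sqrt (2*π) ≤ Real.exp (x^2/2) / Real.sqrt 2 := by
  have hA : Real.sqrt 2 ^ 2 = 2 := Real.sq_sqrt (by norm_num)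
  have hA1 : (1:ℝ) ≤ Real.sqrt 2 := by nlinarith [Real.sqrt_nonneg 2]
  have hA2 : Real.sqrt 2 ≤ 1.5 := by nlinarith [Real.sqrt_nonneg 2]
  have hπ : (3.14:ℝ) ≤ π := by linarith [Real.pi_gt_d6]
  have hπ' : π ≤ 3.15 := by linarith [Real.pi_lt_d2]
  have hB : Real.sqrt (2*π) ^ 2 = 2*π := Real.sq_sqrt (by positivity)
  have hB2 : (2:ℝ) ≤ Real.sqrt (2*π) := by nlinarith [Real.sqrt_nonneg (2*π)]
  have hexp : 1 + x^2/2 ≤ Real.exp (x^2/2) := by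
    have := Real.add_one_le_exp (x^2/2); linarith
  have key : 1/2 + x / Real.sqrt (2*π) ≤ (1 + x^2/2) / Real.sqrt 2 := by
    rw [div_add_div _ _ (by norm_num) (by positivity),
      div_le_div_iff₀ (by positivity) (by positivity)]
    nlinarith [sq_nonneg (x * Real.sqrt (2*π) - Real.sqrt 2), Real.sqrt_nonneg (2*π),
      Real.sqrt_nonneg 2, sq_nonneg x]
  calc 1/2 + x / Real.sqrt (2*π) ≤ (1 + x^2/2) / Real.sqrt 2 := key
    _ ≤ Real.exp (x^2/2) / Real.sqrt 2 := by gcongr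

lemma gauss_symm (v : ℝ≥0) (hv : v ≠ 0) :
    ((gaussianReal 0 v) (Set.Iic 0)).toReal = 1/2 := by
  have hmap : (gaussianReal 0 v).map ((-1 : ℝ) * ·) = gaussianReal 0 v := by
    have := gaussianReal_map_const_mul (μ := 0) (v := v) (-1)
    simpa using this
  have hIci : (gaussianReal 0 v) (Set.Ici 0) = (gaussianReal 0 v) (Set.Iic 0) := by
    conv_lhs => rw [← hmap]
    rw [Measure.map_apply (by fun_prop) measurableSet_Ici]
    congr 1
    ext x
    simp
  have h0 : (gaussianReal 0 v) {(0:ℝ)} = 0 := by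
    have := gaussianReal_absolutelyContinuous 0 hv
    exact this (by simp)
  have hIoi : (gaussianReal 0 v) (Set.Ioi 0) = (gaussianReal 0 v) (Set.Iic 0) := by
    have : Set.Ici (0:ℝ) = {0} ∪ Set.Ioi 0 := by
      ext x; simp [le_iff_lt_or_eq, or_comm, eq_comm]
    rw [this, measure_union (by simp [Set.disjoint_left]) measurableSet_Ioi, h0, zero_add] at hIci
    exact hIci
  have hsum : (gaussianReal 0 v) (Set.Iic 0) + (gaussianReal 0 v) (Set.Ioi 0) = 1 := by
    rw [← measure_union (Set.Iic_disjoint_Ioi le_rfl) measurableSet_Ioi]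
    rw [show Set.Iic (0:ℝ) ∪ Set.Ioi 0 = Set.univ by ext x; simp [le_or_gt]]
    simp
  rw [hIoi] at hsum
  have hfin : (gaussianReal 0 v) (Set.Iic 0) ≠ ⊤ := measure_ne_top _ _
  have := congrArg ENNReal.toReal hsum
  rw [ENNReal.toReal_add hfin hfin] at this
  simp at this
  linarith

lemma gauss_upper (t : ℝ) (ht : 0 < t) (c : ℝ) (hc : 0 ≤ c) :
    ((gaussianReal 0 t.toNNReal) (Set.Iic c)).toReal ≤ 1/2 + c / Real.sqrt (2*π*t) := by
  set v : ℝ≥0 := t.toNNReal with hvdef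
  have hv : v ≠ 0 := by simp [hvdef, Real.toNNReal_eq_zero, not_le, ht]
  have hvt : (v : ℝ) = t := Real.coe_toNNReal t ht.le
  have hsplit : Set.Iic c = Set.Iic 0 ∪ Set.Ioc 0 c := by
    ext x; simp only [Set.mem_Iic, Set.mem_union, Set.mem_Ioc]
    constructor
    · intro h; rcases le_or_gt x 0 with h0 | h0
      · exact Or.inl h0
      · exact Or.inr ⟨h0, h⟩
    · rintro (h | ⟨_, h⟩) <;> [exact h.trans hc; exact h]
  have hdisj : Disjoint (Set.Iic (0:ℝ)) (Set.Ioc 0 c) := by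
    simp [Set.disjoint_left]; intro a h1 h2; linarith
  have hmeas : (gaussianReal 0 v) (Set.Iic c)
      = (gaussianReal 0 v) (Set.Iic 0) + (gaussianReal 0 v) (Set.Ioc 0 c) := by
    rw [hsplit, measure_union hdisj measurableSet_Ioc]
  have hIoc : ((gaussianReal 0 v) (Set.Ioc 0 c)).toReal ≤ c / Real.sqrt (2*π*t) := by
    rw [gaussianReal_apply_eq_integral 0 hv, ENNReal.toReal_ofReal
      (setIntegral_nonneg measurableSet_Ioc fun x _ => gaussianPDFReal_nonneg _ _ _)]
    have hK : (0:ℝ) ≤ (Real.sqrt (2*π*t))⁻¹ := by positivity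
    have hb : ∀ x ∈ Set.Ioc (0:ℝ) c, gaussianPDFReal 0 v x ≤ (Real.sqrt (2*π*t))⁻¹ := by
      intro x _
      unfold gaussianPDFReal
      rw [hvt]
      calc (Real.sqrt (2*π*t))⁻¹ * rexp (-(x-0)^2/(2*t))
          ≤ (Real.sqrt (2*π*t))⁻¹ * 1 := by
            gcongr
            rw [Real.exp_le_one_iff, neg_div]
            have : (0:ℝ) ≤ (x-0)^2/(2*t) := by positivity
            linarith
        _ = (Real.sqrt (2*π*t))⁻¹ := mul_one _
    calc ∫ x in Set.Ioc (0:ℝ) c, gaussianPDFReal 0 v x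
        ≤ ∫ _x in Set.Ioc (0:ℝ) c, (Real.sqrt (2*π*t))⁻¹ := by
          apply setIntegral_mono_on
          · exact (integrable_gaussianPDFReal 0 v).integrableOn
          · exact integrableOn_const (by simp [Real.volume_Ioc])
          · exact measurableSet_Ioc
          · exact hb
      _ = c / Real.sqrt (2*π*t) := by
          rw [setIntegral_const, measureReal_def, Real.volume_Ioc, smul_eq_mul,
            ENNReal.toReal_ofReal (by linarith), sub_zero, div_eq_mul_inv]
  have hIic0 : ((gaussianReal 0 v) (Set.Iic 0)).toReal = 1/2 := gauss_symm v hv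
  rw [hmeas, ENNReal.toReal_add (measure_ne_top _ _) (measure_ne_top _ _), hIic0]
  linarith

lemma gauss_lower (t : ℝ) (ht : 0 < t) (c : ℝ) (hc : 0 ≤ c) :
    1/2 ≤ ((gaussianReal 0 t.toNNReal) (Set.Iic c)).toReal := by
  have hv : t.toNNReal ≠ 0 := by simp [Real.toNNReal_eq_zero, not_le, ht]
  rw [← gauss_symm t.toNNReal hv]
  exact ENNReal.toReal_mono (measure_ne_top _ _) (measure_mono (Set.Iic_subset_Iic.mpr hc))

lemma gauss_iic_bound (t : ℝ) (ht : 0 < t) (c : ℝ) (hc : 0 ≤ c) :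
    ((gaussianReal 0 t.toNNReal) (Set.Iic c)).toReal
      ≤ Real.exp (c^2/t/2) / Real.sqrt 2 := by
  have hst : (0:ℝ) < Real.sqrt t := Real.sqrt_pos.mpr ht
  have h1 := gauss_upper t ht c hc
  have h2 := aux_ineq (c / Real.sqrt t) (by positivity)
  have hx2 : (c / Real.sqrt t)^2 = c^2/t := by
    rw [div_pow, Real.sq_sqrt ht.le]
  rw [hx2] at h2
  have heq : c / Real.sqrt (2*π*t) = (c / Real.sqrt t) / Real.sqrt (2*π) := by
    rw [Real.sqrt_mul (by positivity) t, div_div, mul_comm]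
  rw [heq] at h1
  calc ((gaussianReal 0 t.toNNReal) (Set.Iic c)).toReal
      ≤ 1/2 + (c / Real.sqrt t) / Real.sqrt (2*π) := h1
    _ ≤ Real.exp (c^2/t/2) / Real.sqrt 2 := h2

lemma prob_bounds {Ω : Type*} [MeasurableSpace Ω] (P : Measure Ω) [IsProbabilityMeasure P]
    (X : Ω → ℝ) (t : ℝ) (ht : 0 < t) (hX : Measure.map X P = gaussianReal 0 t.toNNReal)
    (σ μ : ℝ) (hσ : 0 < σ) (hμ : μ ≤ 0) :
    1/2 ≤ (P {ω | σ * X ω + μ * t ≤ 0}).toReal ∧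
      (P {ω | σ * X ω + μ * t ≤ 0}).toReal ≤ Real.exp (μ^2/(2*σ^2)*t) / Real.sqrt 2 := by
  have hAE : AEMeasurable X P := by
    by_contra h
    rw [Measure.map_of_not_aemeasurable h] at hX
    exact (IsProbabilityMeasure.ne_zero (gaussianReal 0 t.toNNReal)) hX.symm
  set c : ℝ := -(μ*t)/σ with hcdef
  have hc : 0 ≤ c := div_nonneg (by nlinarith) hσ.le
  have hset : {ω | σ * X ω + μ * t ≤ 0} = X ⁻¹' (Set.Iic c) := by
    ext ω
    simp only [Set.mem_setOf_eq, Set.mem_preimage, Set.mem_Iic, hcdef]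
    rw [le_div_iff₀ hσ]
    constructor <;> intro h <;> nlinarith
  have hP : P {ω | σ * X ω + μ * t ≤ 0} = (gaussianReal 0 t.toNNReal) (Set.Iic c) := by
    rw [hset, ← hX, Measure.map_apply_of_aemeasurable hAE measurableSet_Iic]
  rw [hP]
  refine ⟨gauss_lower t ht c hc, ?_⟩
  have heq : c^2/t/2 = μ^2/(2*σ^2)*t := by
    rw [hcdef]
    field_simp
  calc ((gaussianReal 0 t.toNNReal) (Set.Iic c)).toReal
      ≤ Real.exp (c^2/t/2) / Real.sqrt 2 := gauss_iic_bound t ht c hc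
    _ = Real.exp (μ^2/(2*σ^2)*t) / Real.sqrt 2 := by rw [heq]

lemma one_sub_exp_neg_le (u : ℝ) : 1 - Real.exp (-u) ≤ u := by
  linarith [Real.add_one_le_exp (-u)]

lemma le_one_sub_exp_neg {u : ℝ} (hu0 : 0 ≤ u) (hu1 : u ≤ 1) :
    u/2 ≤ 1 - Real.exp (-u) := by
  have hu' : (0:ℝ) < 1 + u := by linarith
  have e1 : Real.exp (-u) ≤ 1/(1+u) := by
    rw [Real.exp_neg, inv_eq_one_div]
    exact one_div_le_one_div_of_le (by linarith) (by linarith [Real.add_one_le_exp u])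
  have e2 : (1:ℝ)/(1+u) ≤ 1 - u/2 := by
    rw [div_le_iff₀ hu']
    nlinarith
  linarith

/-- Natural scaling, nonpositive drift with `r > μ²/(2σ²)`: there are `c₁, C₁ > 0` with
`c₁·s^{1/√2} ≤ exp(-S(s)) ≤ C₁·s^{1/2}` for all sufficiently small `s > 0`. -/
theorem scaling_nonpos_drift {Ω : Type*} [MeasurableSpace Ω]
    (P : Measure Ω) [IsProbabilityMeasure P]
    (B : ℝ → Ω → ℝ)
    (hB : ∀ t : ℝ, 0 ≤ t → Measure.map (B t) P = gaussianReal 0 t.toNNReal)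
    (σ μ r : ℝ) (hσ : 0 < σ) (hμ : μ ≤ 0) (hr : μ ^ 2 / (2 * σ ^ 2) < r)
    (S : ℝ → ℝ)
    (hS : ∀ s : ℝ, 0 < s → S s = ∑' n : ℕ,
      Real.exp (-r * (n + 1) * s) / (n + 1) *
        (P {ω | σ * B ((n + 1) * s) ω + μ * ((n + 1) * s) ≤ 0}).toReal) :
    ∃ c₁ C₁ : ℝ, 0 < c₁ ∧ 0 < C₁ ∧ ∃ s₀ : ℝ, 0 < s₀ ∧ ∀ s : ℝ, 0 < s → s ≤ s₀ →
      c₁ * s ^ ((1 : ℝ) / Real.sqrt 2) ≤ Real.exp (-S s) ∧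
      Real.exp (-S s) ≤ C₁ * s ^ ((1 : ℝ) / 2) := by
  set a : ℝ := μ ^ 2 / (2 * σ ^ 2) with hadef
  have ha0 : 0 ≤ a := by positivity
  set b : ℝ := r - a with hbdef
  have hb : 0 < b := by simp [hbdef]; linarith
  have hr0 : 0 < r := lt_of_le_of_lt ha0 hr
  refine ⟨(b/2) ^ ((1:ℝ)/Real.sqrt 2), r ^ ((1:ℝ)/2),
    Real.rpow_pos_of_pos (by positivity) _, Real.rpow_pos_of_pos hr0 _, 1/b, by positivity,
    fun s hs hs0 => ?_⟩
  have hbs1 : b * s ≤ 1 := by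
    rw [le_div_iff₀ hb] at hs0; linarith
  set q : ℝ := Real.exp (-(r*s)) with hqdef
  set q' : ℝ := Real.exp (-(b*s)) with hq'def
  have hq0 : 0 < q := Real.exp_pos _
  have hq1 : q < 1 := Real.exp_lt_one_iff.mpr (by nlinarith)
  have hq'0 : 0 < q' := Real.exp_pos _
  have hq'1 : q' < 1 := Real.exp_lt_one_iff.mpr (by nlinarith)
  -- the summand
  set g : ℕ → ℝ := fun n => Real.exp (-r * (n + 1) * s) / (n + 1) *
      (P {ω | σ * B ((n + 1) * s) ω + μ * ((n + 1) * s) ≤ 0}).toReal with hgdef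
  have hSg : S s = ∑' n, g n := hS s hs
  have hexp_eq : ∀ n : ℕ, Real.exp (-r * (n + 1) * s) = q ^ (n+1) := by
    intro n
    rw [hqdef, ← Real.exp_nat_mul]
    congr 1
    push_cast
    ring
  have hexp_eq' : ∀ n : ℕ, Real.exp (-(b * ((n+1) * s))) = q' ^ (n+1) := by
    intro n
    rw [hq'def, ← Real.exp_nat_mul]
    congr 1
    push_cast
    ring
  have hpb : ∀ n : ℕ,
      1/2 ≤ (P {ω | σ * B ((n + 1) * s) ω + μ * ((n + 1) * s) ≤ 0}).toReal ∧
      (P {ω | σ * B ((n + 1) * s) ω + μ * ((n + 1) * s) ≤ 0}).toReal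
        ≤ Real.exp (a * ((n+1) * s)) / Real.sqrt 2 := by
    intro n
    have ht : (0:ℝ) < ((n:ℝ) + 1) * s := by positivity
    have := prob_bounds P (B (((n:ℝ)+1)*s)) (((n:ℝ)+1)*s) ht (hB _ ht.le) σ μ hσ hμ
    rw [hadef]
    exact this
  have hlow : ∀ n : ℕ, 1/2 * (q ^ (n+1) / ((n:ℝ)+1)) ≤ g n := by
    intro n
    rw [hgdef]
    simp only
    rw [hexp_eq n]
    have h1 : (0:ℝ) ≤ q ^ (n+1) / ((n:ℝ)+1) := by positivity
    calc 1/2 * (q ^ (n+1) / ((n:ℝ)+1)) = q ^ (n+1) / ((n:ℝ)+1) * (1/2) := by ring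
      _ ≤ _ := mul_le_mul_of_nonneg_left (hpb n).1 h1
  have hup : ∀ n : ℕ, g n ≤ 1/Real.sqrt 2 * (q' ^ (n+1) / ((n:ℝ)+1)) := by
    intro n
    rw [hgdef]
    simp only
    rw [hexp_eq n]
    have h1 : (0:ℝ) ≤ q ^ (n+1) / ((n:ℝ)+1) := by positivity
    calc q ^ (n+1) / ((n:ℝ)+1) *
          (P {ω | σ * B ((n + 1) * s) ω + μ * ((n + 1) * s) ≤ 0}).toReal
        ≤ q ^ (n+1) / ((n:ℝ)+1) * (Real.exp (a * ((n+1) * s)) / Real.sqrt 2) :=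
          mul_le_mul_of_nonneg_left (hpb n).2 h1
      _ = 1/Real.sqrt 2 * (q' ^ (n+1) / ((n:ℝ)+1)) := by
          rw [← hexp_eq' n, ← hexp_eq n]
          have hmul : Real.exp (-r * ((n:ℝ) + 1) * s) * Real.exp (a * (((n:ℝ)+1) * s))
              = Real.exp (-(b * (((n:ℝ)+1) * s))) := by
            rw [← Real.exp_add]
            congr 1
            rw [hbdef]; ring
          rw [← hmul]
          ring
  have hgnn : ∀ n : ℕ, 0 ≤ g n := by
    intro n
    rw [hgdef]
    positivity
  have habsq : |q| < 1 := by rw [abs_of_pos hq0]; exact hq1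
  have habsq' : |q'| < 1 := by rw [abs_of_pos hq'0]; exact hq'1
  have hasL : HasSum (fun n : ℕ => 1/2 * (q ^ (n+1) / ((n:ℝ)+1)))
      (1/2 * -Real.log (1 - q)) := by
    have := Real.hasSum_pow_div_log_of_abs_lt_one habsq
    exact this.mul_left _
  have hasU : HasSum (fun n : ℕ => 1/Real.sqrt 2 * (q' ^ (n+1) / ((n:ℝ)+1)))
      (1/Real.sqrt 2 * -Real.log (1 - q')) := by
    have := Real.hasSum_pow_div_log_of_abs_lt_one habsq'
    exact this.mul_left _
  have hgsum : Summable g :=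
    Summable.of_nonneg_of_le hgnn hup hasU.summable
  have hS1 : 1/2 * -Real.log (1 - q) ≤ S s := by
    rw [hSg, ← hasL.tsum_eq]
    exact Summable.tsum_le_tsum hlow hasL.summable hgsum
  have hS2 : S s ≤ 1/Real.sqrt 2 * -Real.log (1 - q') := by
    rw [hSg, ← hasU.tsum_eq]
    exact Summable.tsum_le_tsum hup hgsum hasU.summable
  have h1q : 0 < 1 - q := by linarith
  have h1q' : 0 < 1 - q' := by linarith
  constructor
  · -- lower bound
    have e1 : (1 - q') ^ ((1:ℝ)/Real.sqrt 2) ≤ Real.exp (-S s) := by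
      rw [Real.rpow_def_of_pos h1q']
      apply Real.exp_le_exp.mpr
      linarith
    have e2 : ((b/2) * s) ^ ((1:ℝ)/Real.sqrt 2) ≤ (1 - q') ^ ((1:ℝ)/Real.sqrt 2) := by
      apply Real.rpow_le_rpow (by positivity) ?_ (by positivity)
      have := le_one_sub_exp_neg (mul_nonneg hb.le hs.le) hbs1
      rw [hq'def]
      linarith
    have e3 : ((b/2) * s) ^ ((1:ℝ)/Real.sqrt 2)
        = (b/2) ^ ((1:ℝ)/Real.sqrt 2) * s ^ ((1:ℝ)/Real.sqrt 2) :=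
      Real.mul_rpow (by positivity) hs.le
    rw [← e3]
    exact e2.trans e1
  · -- upper bound
    have e1 : Real.exp (-S s) ≤ (1 - q) ^ ((1:ℝ)/2) := by
      rw [Real.rpow_def_of_pos h1q]
      apply Real.exp_le_exp.mpr
      linarith
    have e2 : (1 - q) ^ ((1:ℝ)/2) ≤ (r * s) ^ ((1:ℝ)/2) :=
      Real.rpow_le_rpow h1q.le (one_sub_exp_neg_le (r*s)) (by norm_num)
    have e3 : (r * s) ^ ((1:ℝ)/2) = r ^ ((1:ℝ)/2) * s ^ ((1:ℝ)/2) :=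
      Real.mul_rpow hr0.le hs.le
    calc Real.exp (-S s) ≤ (1 - q) ^ ((1:ℝ)/2) := e1
      _ ≤ (r * s) ^ ((1:ℝ)/2) := e2
      _ = r ^ ((1:ℝ)/2) * s ^ ((1:ℝ)/2) := e3
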